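/- Let h ∈ Sp(n,1), let g = diag(λ₁, …, λₙ, λ_{n+1}) with each |λᵢ| = 1, and set δ = max_{1≤i≤n} sup{ |u λᵢ u⁻¹ − w λ_{n+1} w⁻¹|² : u, w ∈ ℍ \ {0} }. Define h₀ = h and h_{k+1} = h_k g h_k⁻¹, with block form h_k = [[A^{(k)}, α^{(k)}],[β^{(k)}, a^{(k)}]]. Suppose |a^{(0)}|²·δ < 1 and β^{(k)} ≠ 0 for every k ≥ 0. Then |a^{(k+1)}| < |a^{(k)}| for every k (so the matrices h_k are pairwise distinct), and there exist a strictly increasing sequence of indices k_t and a block-diagonal matrix h_∞ = diag(A_∞, a_∞) ∈ Sp(n,1) such that h_{k_t} → h_∞ entrywise. In particular, the subgroup of Sp(n,1) generated by g and h is not discrete. -/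

import Mathlib

open Quaternion Matrix Filter

/-- The Hermitian form `J = diag(1,…,1,−1)` on `ℍ^{n,1}`, as an `(n+1)×(n+1)`
quaternionic matrix indexed by `Fin n ⊕ Unit`. -/
noncomputable def Jm (n : ℕ) : Matrix (Fin n ⊕ Unit) (Fin n ⊕ Unit) ℍ[ℝ] :=
  Matrix.fromBlocks 1 0 0 (-1)

/-- `Sp(n,1)`: the quaternionic matrices `g` with `g* J g = J`. -/
noncomputable def Sp (n : ℕ) : Set (Matrix (Fin n ⊕ Unit) (Fin n ⊕ Unit) ℍ[ℝ]) :=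
  {g | gᴴ * Jm n * g = Jm n}

/-- The subgroup of `Sp(n,1)` generated by `g` and `h`, realized as the monoid generated
by `g`, `h` and their inverses `J g* J`, `J h* J`. -/
noncomputable def genGrp (n : ℕ) (g h : Matrix (Fin n ⊕ Unit) (Fin n ⊕ Unit) ℍ[ℝ]) :
    Submonoid (Matrix (Fin n ⊕ Unit) (Fin n ⊕ Unit) ℍ[ℝ]) :=
  Submonoid.closure {g, h, Jm n * gᴴ * Jm n, Jm n * hᴴ * Jm n}

section prelim
variable {n : ℕ}

noncomputable def dvec (n : ℕ) : (Fin n ⊕ Unit) → ℍ[ℝ] := Sum.elim (fun _ => 1) (fun _ => -1)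

lemma Jm_eq_diagonal (n : ℕ) : Jm n = Matrix.diagonal (dvec n) := by
  apply Matrix.ext
  intro i j
  rcases i with i | i <;> rcases j with j | j <;>
    simp [Jm, dvec, Matrix.diagonal_apply, Matrix.one_apply, Sum.inl.injEq]

lemma star_dvec (n : ℕ) : star (dvec n) = dvec n := by
  funext i
  rcases i with i | i <;> simp [dvec]

lemma Jm_conjTranspose (n : ℕ) : (Jm n)ᴴ = Jm n := by
  rw [Jm_eq_diagonal, Matrix.diagonal_conjTranspose, star_dvec]

lemma Jm_mul_Jm (n : ℕ) : Jm n * Jm n = 1 := by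
  rw [Jm_eq_diagonal, Matrix.diagonal_mul_diagonal]
  apply Matrix.ext
  intro i j
  by_cases hij : i = j
  · subst hij
    rcases i with i | i <;> simp [Matrix.diagonal_apply, dvec, Matrix.one_apply]
  · simp [Matrix.diagonal_apply_ne _ hij, Matrix.one_apply_ne hij]

lemma my_mul_eq_one_comm {A : Type*} [Ring A] [Algebra ℝ A] [FiniteDimensional ℝ A]
    {a b : A} (hab : a * b = 1) : b * a = 1 := by
  have hinj : Function.Injective (LinearMap.mulLeft ℝ b) := by
    intro x y hxy
    have h2 : a * (b * x) = a * (b * y) := by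
      simpa [LinearMap.mulLeft_apply] using congrArg (fun z => a * z) hxy
    rwa [← mul_assoc, ← mul_assoc, hab, one_mul, one_mul] at h2
  obtain ⟨c, hc⟩ := (LinearMap.injective_iff_surjective.mp hinj) 1
  simp only [LinearMap.mulLeft_apply] at hc
  have hac : a = c := by
    calc a = a * (b * c) := by rw [hc, mul_one]
    _ = (a * b) * c := by rw [mul_assoc]
    _ = c := by rw [hab, one_mul]
  rw [hac.symm] at hc
  exact hc

lemma sp_left_inv {X : Matrix (Fin n ⊕ Unit) (Fin n ⊕ Unit) ℍ[ℝ]} (hX : X ∈ Sp n) :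
    (Jm n * Xᴴ * Jm n) * X = 1 := by
  have h1 : Xᴴ * Jm n * X = Jm n := hX
  calc (Jm n * Xᴴ * Jm n) * X = Jm n * (Xᴴ * Jm n * X) := by
        simp only [Matrix.mul_assoc]
    _ = Jm n * Jm n := by rw [h1]
    _ = 1 := Jm_mul_Jm n

lemma sp_right_inv {X : Matrix (Fin n ⊕ Unit) (Fin n ⊕ Unit) ℍ[ℝ]} (hX : X ∈ Sp n) :
    X * (Jm n * Xᴴ * Jm n) = 1 :=
  my_mul_eq_one_comm (sp_left_inv hX)

lemma sp_row {X : Matrix (Fin n ⊕ Unit) (Fin n ⊕ Unit) ℍ[ℝ]} (hX : X ∈ Sp n) :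
    X * Jm n * Xᴴ = Jm n := by
  have h1 := sp_right_inv hX
  have h2 : X * (Jm n * Xᴴ * Jm n) * Jm n = 1 * Jm n := by rw [h1]
  rw [one_mul] at h2
  calc X * Jm n * Xᴴ = X * (Jm n * Xᴴ * Jm n) * Jm n := by
        simp only [Matrix.mul_assoc, Jm_mul_Jm, Matrix.mul_one]
    _ = Jm n := h2

lemma sp_inv_mem {X : Matrix (Fin n ⊕ Unit) (Fin n ⊕ Unit) ℍ[ℝ]} (hX : X ∈ Sp n) :
    Jm n * Xᴴ * Jm n ∈ Sp n := by
  show (Jm n * Xᴴ * Jm n)ᴴ * Jm n * (Jm n * Xᴴ * Jm n) = Jm n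
  have h1 : (Jm n * Xᴴ * Jm n)ᴴ = Jm n * X * Jm n := by
    simp only [Matrix.conjTranspose_mul, Jm_conjTranspose, Matrix.conjTranspose_conjTranspose]
    simp only [Matrix.mul_assoc]
  rw [h1]
  calc Jm n * X * Jm n * Jm n * (Jm n * Xᴴ * Jm n)
      = Jm n * (X * Jm n * Xᴴ) * Jm n := by
        simp only [Matrix.mul_assoc, Jm_mul_Jm, Matrix.mul_one, Matrix.one_mul]
    _ = Jm n * Jm n * Jm n := by rw [sp_row hX]
    _ = Jm n := by rw [Jm_mul_Jm, one_mul]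

lemma sp_mul_mem {X Y : Matrix (Fin n ⊕ Unit) (Fin n ⊕ Unit) ℍ[ℝ]}
    (hX : X ∈ Sp n) (hY : Y ∈ Sp n) : X * Y ∈ Sp n := by
  show (X * Y)ᴴ * Jm n * (X * Y) = Jm n
  rw [Matrix.conjTranspose_mul]
  calc Yᴴ * Xᴴ * Jm n * (X * Y) = Yᴴ * (Xᴴ * Jm n * X) * Y := by
        simp only [Matrix.mul_assoc]
    _ = Yᴴ * Jm n * Y := by rw [show Xᴴ * Jm n * X = Jm n from hX]
    _ = Jm n := hY

lemma sp_diag_mem {lam : (Fin n ⊕ Unit) → ℍ[ℝ]} (hlam : ∀ i, ‖lam i‖ = 1) :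
    Matrix.diagonal lam ∈ Sp n := by
  show (Matrix.diagonal lam)ᴴ * Jm n * Matrix.diagonal lam = Jm n
  rw [Jm_eq_diagonal, Matrix.diagonal_conjTranspose, Matrix.diagonal_mul_diagonal,
    Matrix.diagonal_mul_diagonal]
  have key : ∀ i, star (lam i) * lam i = 1 := by
    intro i
    rw [Quaternion.star_mul_self]
    have h2 : Quaternion.normSq (lam i) = 1 := by
      rw [Quaternion.normSq_eq_norm_mul_self, hlam i, one_mul]
    rw [h2]
    exact Quaternion.coe_one
  apply Matrix.ext
  intro i j
  by_cases hij : i = j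
  · subst hij
    simp only [Matrix.diagonal_apply_eq, Pi.star_apply]
    rcases i with i | i <;>
      simp only [dvec, Sum.elim_inl, Sum.elim_inr, mul_one, mul_neg, neg_mul, neg_inj] <;>
      rw [key]
  · simp [Matrix.diagonal_apply_ne _ hij]

lemma JXJ_apply (X : Matrix (Fin n ⊕ Unit) (Fin n ⊕ Unit) ℍ[ℝ]) (i j : Fin n ⊕ Unit) :
    (Jm n * Xᴴ * Jm n) i j = dvec n i * star (X j i) * dvec n j := by
  rw [Jm_eq_diagonal, Matrix.mul_diagonal, Matrix.diagonal_mul, Matrix.conjTranspose_apply]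

lemma step_ee (lam : (Fin n ⊕ Unit) → ℍ[ℝ]) (X : Matrix (Fin n ⊕ Unit) (Fin n ⊕ Unit) ℍ[ℝ]) :
    (X * Matrix.diagonal lam * (Jm n * Xᴴ * Jm n)) (Sum.inr ()) (Sum.inr ()) =
      X (Sum.inr ()) (Sum.inr ()) * lam (Sum.inr ()) * star (X (Sum.inr ()) (Sum.inr ()))
      - ∑ i : Fin n, X (Sum.inr ()) (Sum.inl i) * lam (Sum.inl i)
          * star (X (Sum.inr ()) (Sum.inl i)) := by
  rw [Matrix.mul_apply, Fintype.sum_sum_type]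
  have h1 : ∀ j : Fin n ⊕ Unit,
      (X * Matrix.diagonal lam) (Sum.inr ()) j * (Jm n * Xᴴ * Jm n) j (Sum.inr ()) =
      (X (Sum.inr ()) j * lam j) * (dvec n j * star (X (Sum.inr ()) j) * dvec n (Sum.inr ())) := by
    intro j
    rw [Matrix.mul_diagonal, JXJ_apply]
  simp only [h1, dvec, Sum.elim_inl, Sum.elim_inr, one_mul, mul_neg, mul_one, neg_mul, neg_neg,
    Finset.sum_neg_distrib, Fintype.sum_unique]
  rw [neg_add_eq_sub]

lemma sp_row_sum {X : Matrix (Fin n ⊕ Unit) (Fin n ⊕ Unit) ℍ[ℝ]} (hX : X ∈ Sp n) :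
    ∑ i : Fin n, ‖X (Sum.inr ()) (Sum.inl i)‖ ^ 2 = ‖X (Sum.inr ()) (Sum.inr ())‖ ^ 2 - 1 := by
  have h0 := sp_row hX
  have h1 : (X * Jm n * Xᴴ) (Sum.inr ()) (Sum.inr ()) = Jm n (Sum.inr ()) (Sum.inr ()) := by
    rw [h0]
  rw [Matrix.mul_apply, Fintype.sum_sum_type] at h1
  have h2 : ∀ j : Fin n ⊕ Unit,
      (X * Jm n) (Sum.inr ()) j * Xᴴ j (Sum.inr ()) =
      (X (Sum.inr ()) j * dvec n j) * star (X (Sum.inr ()) j) := by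
    intro j
    rw [Jm_eq_diagonal, Matrix.mul_diagonal, Matrix.conjTranspose_apply]
  simp only [h2, dvec, Sum.elim_inl, Sum.elim_inr, mul_one, mul_neg, neg_mul, neg_one_mul,
    Fintype.sum_unique] at h1
  have h3 : ∀ x : ℍ[ℝ], x * star x = ((‖x‖ ^ 2 : ℝ) : ℍ[ℝ]) := by
    intro x
    rw [Quaternion.self_mul_star, Quaternion.normSq_eq_norm_mul_self, sq]
  simp only [h3] at h1
  have h4 : Jm n (Sum.inr () : Fin n ⊕ Unit) (Sum.inr ()) = ((-1 : ℝ) : ℍ[ℝ]) := by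
    rw [Jm_eq_diagonal, Matrix.diagonal_apply_eq]
    simp [dvec]
  rw [h4] at h1
  have hcoe : ((∑ i : Fin n, ‖X (Sum.inr ()) (Sum.inl i)‖ ^ 2 : ℝ) : ℍ[ℝ])
      = ∑ i : Fin n, ((‖X (Sum.inr ()) (Sum.inl i)‖ ^ 2 : ℝ) : ℍ[ℝ]) := by
    rw [show (Quaternion.coe : ℝ → ℍ[ℝ]) = ⇑(algebraMap ℝ ℍ[ℝ]) from
      (QuaternionAlgebra.coe_algebraMap).symm]
    exact map_sum (algebraMap ℝ ℍ[ℝ]) _ _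
  have h7 : ((∑ i : Fin n, ‖X (Sum.inr ()) (Sum.inl i)‖ ^ 2
        - ‖X (Sum.inr ()) (Sum.inr ())‖ ^ 2 : ℝ) : ℍ[ℝ]) = ((-1 : ℝ) : ℍ[ℝ]) := by
    rw [Quaternion.coe_sub, sub_eq_add_neg, Quaternion.coe_neg, hcoe]
    rw [show ((-1:ℝ):ℍ[ℝ]) = -((1:ℝ):ℍ[ℝ]) from Quaternion.coe_neg 1] at h1
    exact h1
  have h8 := Quaternion.coe_injective h7
  linarith


lemma coe_helper {m : ℕ} (f : Fin m → ℝ) (g c : ℝ)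
    (h : (∑ i, ((f i : ℝ) : ℍ[ℝ])) + -((g : ℝ) : ℍ[ℝ]) = ((c : ℝ) : ℍ[ℝ])) :
    (∑ i, f i) - g = c := by
  have hcoe : ((∑ i, f i : ℝ) : ℍ[ℝ]) = ∑ i, ((f i : ℝ) : ℍ[ℝ]) := by
    rw [show (Quaternion.coe : ℝ → ℍ[ℝ]) = ⇑(algebraMap ℝ ℍ[ℝ]) from
      (QuaternionAlgebra.coe_algebraMap).symm]
    exact map_sum (algebraMap ℝ ℍ[ℝ]) _ _
  have h2 : ((∑ i, f i - g : ℝ) : ℍ[ℝ]) = ((c : ℝ) : ℍ[ℝ]) := by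
    rw [Quaternion.coe_sub, sub_eq_add_neg, hcoe]
    exact h
  exact Quaternion.coe_injective h2

lemma star_mul_self_norm (x : ℍ[ℝ]) : star x * x = ((‖x‖ ^ 2 : ℝ) : ℍ[ℝ]) := by
  rw [Quaternion.star_mul_self, Quaternion.normSq_eq_norm_mul_self, sq]

lemma self_mul_star_norm (x : ℍ[ℝ]) : x * star x = ((‖x‖ ^ 2 : ℝ) : ℍ[ℝ]) := by
  rw [Quaternion.self_mul_star, Quaternion.normSq_eq_norm_mul_self, sq]

lemma sp_col_sum {X : Matrix (Fin n ⊕ Unit) (Fin n ⊕ Unit) ℍ[ℝ]} (hX : X ∈ Sp n)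
    (j : Fin n ⊕ Unit) :
    (∑ r : Fin n, ‖X (Sum.inl r) j‖ ^ 2) - ‖X (Sum.inr ()) j‖ ^ 2 =
      Sum.elim (fun _ => (1 : ℝ)) (fun _ => -1) j := by
  have hX' : Xᴴ * Jm n * X = Jm n := hX
  have h1 : (Xᴴ * Jm n * X) j j = Jm n j j := by rw [hX']
  rw [Matrix.mul_apply, Fintype.sum_sum_type] at h1
  have h2 : ∀ r : Fin n ⊕ Unit, (Xᴴ * Jm n) j r * X r j =
      star (X r j) * dvec n r * X r j := by
    intro r
    rw [Jm_eq_diagonal, Matrix.mul_diagonal, Matrix.conjTranspose_apply]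
  simp only [h2, dvec, Sum.elim_inl, Sum.elim_inr, mul_one, mul_neg, mul_neg_one, neg_mul,
    Fintype.sum_unique, star_mul_self_norm] at h1
  have h3 : Jm n j j = ((Sum.elim (fun _ => (1 : ℝ)) (fun _ => -1) j : ℝ) : ℍ[ℝ]) := by
    rw [Jm_eq_diagonal, Matrix.diagonal_apply_eq]
    rcases j with j | j <;> simp [dvec]
  rw [h3] at h1
  exact coe_helper _ _ _ h1

lemma sp_col_alpha {X : Matrix (Fin n ⊕ Unit) (Fin n ⊕ Unit) ℍ[ℝ]} (hX : X ∈ Sp n) :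
    ∑ r : Fin n, ‖X (Sum.inl r) (Sum.inr ())‖ ^ 2 = ‖X (Sum.inr ()) (Sum.inr ())‖ ^ 2 - 1 := by
  have := sp_col_sum hX (Sum.inr ())
  simp only [Sum.elim_inr] at this
  linarith

lemma sp_one_le_norm {X : Matrix (Fin n ⊕ Unit) (Fin n ⊕ Unit) ℍ[ℝ]} (hX : X ∈ Sp n) :
    1 ≤ ‖X (Sum.inr ()) (Sum.inr ())‖ := by
  have h1 := sp_row_sum hX
  have h2 : (0 : ℝ) ≤ ∑ i : Fin n, ‖X (Sum.inr ()) (Sum.inl i)‖ ^ 2 :=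
    Finset.sum_nonneg fun i _ => sq_nonneg _
  nlinarith [norm_nonneg (X (Sum.inr ()) (Sum.inr ()))]

lemma sp_entry_bound {X : Matrix (Fin n ⊕ Unit) (Fin n ⊕ Unit) ℍ[ℝ]} (hX : X ∈ Sp n)
    (i j : Fin n ⊕ Unit) : ‖X i j‖ ≤ ‖X (Sum.inr ()) (Sum.inr ())‖ := by
  set a := ‖X (Sum.inr ()) (Sum.inr ())‖ with ha
  have ha1 : 1 ≤ a := sp_one_le_norm hX
  have hrow := sp_row_sum hX
  have hsq : ‖X i j‖ ^ 2 ≤ a ^ 2 := by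
    rcases j with j | j
    · have hcol := sp_col_sum hX (Sum.inl j)
      simp only [Sum.elim_inl] at hcol
      have hbj : ‖X (Sum.inr ()) (Sum.inl j)‖ ^ 2 ≤ a ^ 2 - 1 := by
        rw [← hrow]
        exact Finset.single_le_sum (f := fun i => ‖X (Sum.inr ()) (Sum.inl i)‖ ^ 2)
          (fun i _ => sq_nonneg _) (Finset.mem_univ j)
      rcases i with i | i
      · have : ‖X (Sum.inl i) (Sum.inl j)‖ ^ 2 ≤ ∑ r : Fin n, ‖X (Sum.inl r) (Sum.inl j)‖ ^ 2 :=
          Finset.single_le_sum (f := fun r => ‖X (Sum.inl r) (Sum.inl j)‖ ^ 2)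
            (fun r _ => sq_nonneg _) (Finset.mem_univ i)
        linarith
      · linarith
    · have hcol := sp_col_alpha hX
      rcases i with i | i
      · have : ‖X (Sum.inl i) (Sum.inr ())‖ ^ 2 ≤
            ∑ r : Fin n, ‖X (Sum.inl r) (Sum.inr ())‖ ^ 2 :=
          Finset.single_le_sum (f := fun r => ‖X (Sum.inl r) (Sum.inr ())‖ ^ 2)
            (fun r _ => sq_nonneg _) (Finset.mem_univ i)
        linarith
      · exact le_of_eq rfl
  nlinarith [norm_nonneg (X i j), norm_nonneg (X (Sum.inr ()) (Sum.inr ()))]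


lemma norm_unit_smul {x : ℍ[ℝ]} (hx : x ≠ 0) : ‖(‖x‖⁻¹ • x : ℍ[ℝ])‖ = 1 := by
  rw [norm_smul, Real.norm_eq_abs, abs_of_nonneg (inv_nonneg.mpr (norm_nonneg x)),
    inv_mul_cancel₀ (norm_ne_zero_iff.mpr hx)]

lemma star_eq_inv_of_norm_one {u : ℍ[ℝ]} (hu : ‖u‖ = 1) : star u = u⁻¹ := by
  have h1 : Quaternion.normSq u = 1 := by
    rw [Quaternion.normSq_eq_norm_mul_self, hu, one_mul]
  rw [Quaternion.inv_def, h1]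
  simp

lemma conj_decomp {x : ℍ[ℝ]} (hx : x ≠ 0) (lamv : ℍ[ℝ]) :
    x * lamv * star x
      = (‖x‖ ^ 2) • ((‖x‖⁻¹ • x) * lamv * star (‖x‖⁻¹ • x)) := by
  have hne : (‖x‖ : ℝ) ≠ 0 := norm_ne_zero_iff.mpr hx
  have h1 : star ((‖x‖⁻¹ • x : ℍ[ℝ])) = ‖x‖⁻¹ • star x := Quaternion.star_smul _ _
  rw [h1, smul_mul_assoc, smul_mul_assoc, mul_smul_comm, smul_smul, smul_smul]
  rw [show ‖x‖ ^ 2 * ‖x‖⁻¹ * ‖x‖⁻¹ = 1 by field_simp, one_smul]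

lemma key_ineq {m : ℕ} (lamF : Fin m → ℍ[ℝ]) (μ : ℍ[ℝ]) (hlamF : ∀ i, ‖lamF i‖ = 1)
    (hμ : ‖μ‖ = 1) (δ : ℝ) (hδ0 : 0 ≤ δ)
    (hδb : ∀ (i : Fin m) (u w : ℍ[ℝ]), u ≠ 0 → w ≠ 0 →
      ‖u * lamF i * u⁻¹ - w * μ * w⁻¹‖ ^ 2 ≤ δ)
    (a : ℍ[ℝ]) (β : Fin m → ℍ[ℝ])
    (hrel : ∑ i, ‖β i‖ ^ 2 = ‖a‖ ^ 2 - 1) (ha : 1 ≤ ‖a‖) :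
    ‖a * μ * star a - ∑ i, β i * lamF i * star (β i)‖ ^ 2
      ≤ 1 + (‖a‖ ^ 2 - 1) * ‖a‖ ^ 2 * δ := by
  classical
  have ha0 : a ≠ 0 := by
    intro h0
    rw [h0, norm_zero] at ha
    linarith
  set u : ℍ[ℝ] := ‖a‖⁻¹ • a with hu
  have hune : u ≠ 0 := smul_ne_zero (inv_ne_zero (norm_ne_zero_iff.mpr ha0)) ha0
  have hnu : ‖u‖ = 1 := norm_unit_smul ha0
  set p : ℍ[ℝ] := u * μ * star u with hp
  have hpnorm : ‖p‖ = 1 := by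
    rw [hp, norm_mul, norm_mul, norm_star, hnu, hμ]
    ring
  set pv : Fin m → ℍ[ℝ] := fun i =>
    if β i = 0 then p
    else (‖β i‖⁻¹ • β i) * lamF i * star (‖β i‖⁻¹ • β i) with hpv
  have hpvnorm : ∀ i, ‖pv i‖ = 1 := by
    intro i
    by_cases hb : β i = 0
    · simp only [hpv]
      rw [if_pos hb]
      exact hpnorm
    · simp only [hpv]
      rw [if_neg hb, norm_mul, norm_mul, norm_star, norm_unit_smul hb, hlamF]
      ring
  have hdiff : ∀ i, ‖p - pv i‖ ^ 2 ≤ δ := by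
    intro i
    by_cases hb : β i = 0
    · have : pv i = p := by
        simp only [hpv]
        rw [if_pos hb]
      rw [this, sub_self, norm_zero]
      simpa using hδ0
    · have hwne : (‖β i‖⁻¹ • β i : ℍ[ℝ]) ≠ 0 :=
        smul_ne_zero (inv_ne_zero (norm_ne_zero_iff.mpr hb)) hb
      have h1 : pv i = (‖β i‖⁻¹ • β i) * lamF i * (‖β i‖⁻¹ • β i)⁻¹ := by
        simp only [hpv]
        rw [if_neg hb, star_eq_inv_of_norm_one (norm_unit_smul hb)]
      have h2 : p = u * μ * u⁻¹ := by
        rw [hp, star_eq_inv_of_norm_one hnu]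
      rw [norm_sub_rev, h1, h2]
      exact hδb i _ _ hwne hune
  have hrep : ∀ i, β i * lamF i * star (β i) = (‖β i‖ ^ 2) • pv i := by
    intro i
    by_cases hb : β i = 0
    · simp [hb]
    · simp only [hpv]
      rw [if_neg hb]
      exact conj_decomp hb (lamF i)
  have harep : a * μ * star a = (‖a‖ ^ 2) • p := conj_decomp ha0 μ
  set v : ℍ[ℝ] := ∑ i, (‖β i‖ ^ 2) • (p - pv i) with hv
  have hsum : a * μ * star a - ∑ i, β i * lamF i * star (β i) = p + v := by
    rw [harep, hv]
    have h3 : ∑ i, (‖β i‖ ^ 2) • (p - pv i)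
        = (‖a‖ ^ 2 - 1) • p - ∑ i, (‖β i‖ ^ 2) • pv i := by
      simp only [smul_sub]
      rw [Finset.sum_sub_distrib, ← Finset.sum_smul, hrel]
    rw [h3]
    simp only [hrep]
    rw [sub_smul, one_smul]
    abel
  rw [hsum]
  have hnormv : ‖v‖ ≤ (‖a‖ ^ 2 - 1) * Real.sqrt δ := by
    calc ‖v‖ ≤ ∑ i, ‖(‖β i‖ ^ 2) • (p - pv i)‖ := norm_sum_le _ _
    _ = ∑ i, ‖β i‖ ^ 2 * ‖p - pv i‖ := by
        apply Finset.sum_congr rfl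
        intro i _
        rw [norm_smul, Real.norm_eq_abs, abs_of_nonneg (sq_nonneg _)]
    _ ≤ ∑ i, ‖β i‖ ^ 2 * Real.sqrt δ := by
        apply Finset.sum_le_sum
        intro i _
        apply mul_le_mul_of_nonneg_left _ (sq_nonneg _)
        rw [show Real.sqrt δ = Real.sqrt δ from rfl]
        have := hdiff i
        nlinarith [Real.sq_sqrt hδ0, Real.sqrt_nonneg δ, norm_nonneg (p - pv i)]
    _ = (‖a‖ ^ 2 - 1) * Real.sqrt δ := by rw [← Finset.sum_mul, hrel]
  have hinner : (inner ℝ p v : ℝ) ≤ (‖a‖ ^ 2 - 1) * (δ / 2) := by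
    rw [hv, inner_sum]
    have h4 : ∀ i : Fin m, (inner ℝ p ((‖β i‖ ^ 2) • (p - pv i)) : ℝ)
        = ‖β i‖ ^ 2 * ((‖p - pv i‖ ^ 2) / 2) := by
      intro i
      rw [real_inner_smul_right]
      congr 1
      have h5 := norm_sub_sq_real p (p - pv i)
      have h6 : p - (p - pv i) = pv i := by abel
      rw [h6, hpnorm, hpvnorm i] at h5
      nlinarith [h5]
    rw [Finset.sum_congr rfl (fun i _ => h4 i)]
    calc ∑ i, ‖β i‖ ^ 2 * ((‖p - pv i‖ ^ 2) / 2)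
        ≤ ∑ i, ‖β i‖ ^ 2 * (δ / 2) := by
          apply Finset.sum_le_sum
          intro i _
          apply mul_le_mul_of_nonneg_left _ (sq_nonneg _)
          linarith [hdiff i]
    _ = (‖a‖ ^ 2 - 1) * (δ / 2) := by rw [← Finset.sum_mul, hrel]
  have hexp := norm_add_sq_real p v
  have hs1 : (0 : ℝ) ≤ ‖a‖ ^ 2 - 1 := by nlinarith
  have hv2 : ‖v‖ ^ 2 ≤ (‖a‖ ^ 2 - 1) ^ 2 * δ := by
    have h7 : ((‖a‖ ^ 2 - 1) * Real.sqrt δ) ^ 2 = (‖a‖ ^ 2 - 1) ^ 2 * δ := by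
      rw [mul_pow, Real.sq_sqrt hδ0]
    nlinarith [norm_nonneg v, Real.sqrt_nonneg δ, hnormv]
  rw [hexp, hpnorm]
  nlinarith [hinner, hv2]


lemma matrix_compact (r : ℝ) :
    IsCompact {M : Matrix (Fin n ⊕ Unit) (Fin n ⊕ Unit) ℍ[ℝ] |
      ∀ i j, M i j ∈ Metric.closedBall (0 : ℍ[ℝ]) r} := by
  have heq : {M : Matrix (Fin n ⊕ Unit) (Fin n ⊕ Unit) ℍ[ℝ] |
      ∀ i j, M i j ∈ Metric.closedBall (0 : ℍ[ℝ]) r} =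
      Set.univ.pi (fun _ : Fin n ⊕ Unit =>
        Set.univ.pi fun _ : Fin n ⊕ Unit => Metric.closedBall (0 : ℍ[ℝ]) r) := by
    ext M
    constructor
    · intro hM
      refine Set.mem_univ_pi.mpr ?_
      intro i
      rw [Set.mem_univ_pi]
      intro j
      exact hM i j
    · intro hM i j
      exact (Set.mem_univ_pi.mp ((Set.mem_univ_pi.mp hM) i)) j
  rw [heq]
  exact isCompact_univ_pi fun _ => isCompact_univ_pi fun _ =>
    ProperSpace.isCompact_closedBall _ _

lemma tau_tau (X : Matrix (Fin n ⊕ Unit) (Fin n ⊕ Unit) ℍ[ℝ]) :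
    Jm n * (Jm n * Xᴴ * Jm n)ᴴ * Jm n = X := by
  have h1 : (Jm n * Xᴴ * Jm n)ᴴ = Jm n * (X * Jm n) := by
    simp only [Matrix.conjTranspose_mul, Jm_conjTranspose, Matrix.conjTranspose_conjTranspose,
      Matrix.mul_assoc]
  rw [h1]
  calc Jm n * (Jm n * (X * Jm n)) * Jm n = (Jm n * Jm n) * X * (Jm n * Jm n) := by
        simp only [Matrix.mul_assoc]
    _ = X := by rw [Jm_mul_Jm]; simp

lemma tau_mul (X Y : Matrix (Fin n ⊕ Unit) (Fin n ⊕ Unit) ℍ[ℝ]) :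
    Jm n * (X * Y)ᴴ * Jm n = (Jm n * Yᴴ * Jm n) * (Jm n * Xᴴ * Jm n) := by
  rw [Matrix.conjTranspose_mul]
  calc Jm n * (Yᴴ * Xᴴ) * Jm n = Jm n * Yᴴ * ((Jm n * Jm n) * (Xᴴ * Jm n)) := by
        rw [Jm_mul_Jm]
        simp only [Matrix.mul_assoc, Matrix.one_mul]
    _ = (Jm n * Yᴴ * Jm n) * (Jm n * Xᴴ * Jm n) := by simp only [Matrix.mul_assoc]

end prelim

theorem stmt11 (n : ℕ) (h : Matrix (Fin n ⊕ Unit) (Fin n ⊕ Unit) ℍ[ℝ]) (hSp : h ∈ Sp n)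
    (lam : Fin n ⊕ Unit → ℍ[ℝ]) (hlam : ∀ i, ‖lam i‖ = 1)
    (δ : ℝ)
    (hδ : δ = sSup {r : ℝ | ∃ i : Fin n, ∃ u w : ℍ[ℝ], u ≠ 0 ∧ w ≠ 0 ∧
        r = ‖u * lam (Sum.inl i) * u⁻¹ - w * lam (Sum.inr ()) * w⁻¹‖ ^ 2})
    (hs : ℕ → Matrix (Fin n ⊕ Unit) (Fin n ⊕ Unit) ℍ[ℝ])
    (hs0 : hs 0 = h)
    (hsrec : ∀ k, hs (k + 1) = hs k * Matrix.diagonal lam * (Jm n * (hs k)ᴴ * Jm n))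
    (hsmall : ‖h (Sum.inr ()) (Sum.inr ())‖ ^ 2 * δ < 1)
    (hβ : ∀ k, ∃ i : Fin n, hs k (Sum.inr ()) (Sum.inl i) ≠ 0) :
    (∀ k, ‖hs (k + 1) (Sum.inr ()) (Sum.inr ())‖ < ‖hs k (Sum.inr ()) (Sum.inr ())‖)
    ∧ Function.Injective hs
    ∧ (∃ ks : ℕ → ℕ, StrictMono ks ∧
        ∃ (Ainf : Matrix (Fin n) (Fin n) ℍ[ℝ]) (ainf : ℍ[ℝ]),
          Matrix.fromBlocks Ainf 0 0 (Matrix.of fun _ _ => ainf) ∈ Sp n ∧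
          Tendsto (fun t => hs (ks t)) atTop
            (nhds (Matrix.fromBlocks Ainf 0 0 (Matrix.of fun _ _ => ainf))))
    ∧ ¬ DiscreteTopology (genGrp n (Matrix.diagonal lam) h) := by
  obtain ⟨i0, hi0⟩ := hβ 0
  -- properties of δ
  have hSbdd : BddAbove {r : ℝ | ∃ i : Fin n, ∃ u w : ℍ[ℝ], u ≠ 0 ∧ w ≠ 0 ∧
      r = ‖u * lam (Sum.inl i) * u⁻¹ - w * lam (Sum.inr ()) * w⁻¹‖ ^ 2} := by
    refine ⟨4, ?_⟩
    rintro r ⟨i, u, w, hu, hw, rfl⟩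
    have h1 : ∀ (x : ℍ[ℝ]) (j : Fin n ⊕ Unit), x ≠ 0 → ‖x * lam j * x⁻¹‖ = 1 := by
      intro x j hx
      rw [norm_mul, norm_mul, hlam, norm_inv, mul_one,
        mul_inv_cancel₀ (norm_ne_zero_iff.mpr hx)]
    have h2 : ‖u * lam (Sum.inl i) * u⁻¹ - w * lam (Sum.inr ()) * w⁻¹‖ ≤ 2 := by
      calc ‖u * lam (Sum.inl i) * u⁻¹ - w * lam (Sum.inr ()) * w⁻¹‖
          ≤ ‖u * lam (Sum.inl i) * u⁻¹‖ + ‖w * lam (Sum.inr ()) * w⁻¹‖ := norm_sub_le _ _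
      _ = 2 := by rw [h1 u _ hu, h1 w _ hw]; norm_num
    nlinarith [norm_nonneg (u * lam (Sum.inl i) * u⁻¹ - w * lam (Sum.inr ()) * w⁻¹)]
  have hδb : ∀ (i : Fin n) (u w : ℍ[ℝ]), u ≠ 0 → w ≠ 0 →
      ‖u * lam (Sum.inl i) * u⁻¹ - w * lam (Sum.inr ()) * w⁻¹‖ ^ 2 ≤ δ := by
    intro i u w hu hw
    rw [hδ]
    exact le_csSup hSbdd ⟨i, u, w, hu, hw, rfl⟩
  have hδ0 : (0 : ℝ) ≤ δ :=
    le_trans (sq_nonneg _) (hδb i0 1 1 one_ne_zero one_ne_zero)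
  -- membership in Sp
  have hsSp : ∀ k, hs k ∈ Sp n := by
    intro k
    induction k with
    | zero => rw [hs0]; exact hSp
    | succ k ih =>
      rw [hsrec]
      exact sp_mul_mem (sp_mul_mem ih (sp_diag_mem hlam)) (sp_inv_mem ih)
  have ha1 : ∀ k, 1 ≤ ‖hs k (Sum.inr ()) (Sum.inr ())‖ := fun k => sp_one_le_norm (hsSp k)
  have hbpos : ∀ k, 1 < ‖hs k (Sum.inr ()) (Sum.inr ())‖ ^ 2 := by
    intro k
    obtain ⟨i, hi⟩ := hβ k
    have h1 : 0 < ‖hs k (Sum.inr ()) (Sum.inl i)‖ ^ 2 := pow_pos (norm_pos_iff.mpr hi) 2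
    have h2 : ‖hs k (Sum.inr ()) (Sum.inl i)‖ ^ 2
        ≤ ∑ r : Fin n, ‖hs k (Sum.inr ()) (Sum.inl r)‖ ^ 2 :=
      Finset.single_le_sum (f := fun r => ‖hs k (Sum.inr ()) (Sum.inl r)‖ ^ 2)
        (fun r _ => sq_nonneg _) (Finset.mem_univ i)
    have h3 := sp_row_sum (hsSp k)
    linarith
  -- the key step estimate
  have hkey : ∀ k, ‖hs (k + 1) (Sum.inr ()) (Sum.inr ())‖ ^ 2
      ≤ 1 + (‖hs k (Sum.inr ()) (Sum.inr ())‖ ^ 2 - 1)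
        * ‖hs k (Sum.inr ()) (Sum.inr ())‖ ^ 2 * δ := by
    intro k
    have h2 : hs (k + 1) (Sum.inr ()) (Sum.inr ()) =
        hs k (Sum.inr ()) (Sum.inr ()) * lam (Sum.inr ())
          * star (hs k (Sum.inr ()) (Sum.inr ()))
        - ∑ i : Fin n, hs k (Sum.inr ()) (Sum.inl i) * lam (Sum.inl i)
            * star (hs k (Sum.inr ()) (Sum.inl i)) := by
      rw [hsrec k]
      exact step_ee lam (hs k)
    rw [h2]
    exact key_ineq (fun i => lam (Sum.inl i)) (lam (Sum.inr ()))
      (fun i => hlam _) (hlam _) δ hδ0 hδb _ _ (sp_row_sum (hsSp k)) (ha1 k)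
  set c : ℝ := ‖h (Sum.inr ()) (Sum.inr ())‖ ^ 2 * δ with hcdef
  have hc0 : 0 ≤ c := mul_nonneg (sq_nonneg _) hδ0
  have hc1 : c < 1 := hsmall
  -- monotone bounds
  have hmono : ∀ k, ‖hs k (Sum.inr ()) (Sum.inr ())‖ ≤ ‖h (Sum.inr ()) (Sum.inr ())‖
      ∧ ‖hs k (Sum.inr ()) (Sum.inr ())‖ ^ 2 - 1
        ≤ c ^ k * (‖h (Sum.inr ()) (Sum.inr ())‖ ^ 2 - 1) := by
    intro k
    induction k with
    | zero => rw [hs0]; exact ⟨le_refl _, by simp⟩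
    | succ k ih =>
      obtain ⟨iha, ihb⟩ := ih
      have h1 := hkey k
      have hb0 : 0 < ‖hs k (Sum.inr ()) (Sum.inr ())‖ ^ 2 - 1 := by
        have := hbpos k
        linarith
      have hsq : ‖hs k (Sum.inr ()) (Sum.inr ())‖ ^ 2
          ≤ ‖h (Sum.inr ()) (Sum.inr ())‖ ^ 2 := by
        nlinarith [norm_nonneg (hs k (Sum.inr ()) (Sum.inr ())), ha1 k]
      have h2 : ‖hs (k + 1) (Sum.inr ()) (Sum.inr ())‖ ^ 2 - 1
          ≤ c * (‖hs k (Sum.inr ()) (Sum.inr ())‖ ^ 2 - 1) := by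
        have h3 : (‖hs k (Sum.inr ()) (Sum.inr ())‖ ^ 2 - 1)
            * ‖hs k (Sum.inr ()) (Sum.inr ())‖ ^ 2 * δ
            ≤ (‖hs k (Sum.inr ()) (Sum.inr ())‖ ^ 2 - 1) * c := by
          rw [hcdef, ← mul_assoc]
          apply mul_le_mul_of_nonneg_right _ hδ0
          exact mul_le_mul_of_nonneg_left hsq (le_of_lt hb0)
        linarith [h1, h3]
      constructor
      · have h4 : c * (‖hs k (Sum.inr ()) (Sum.inr ())‖ ^ 2 - 1)
            ≤ ‖hs k (Sum.inr ()) (Sum.inr ())‖ ^ 2 - 1 := by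
          nlinarith
        have h5 : ‖hs (k + 1) (Sum.inr ()) (Sum.inr ())‖ ^ 2
            ≤ ‖h (Sum.inr ()) (Sum.inr ())‖ ^ 2 := by nlinarith
        nlinarith [norm_nonneg (hs (k + 1) (Sum.inr ()) (Sum.inr ())),
          norm_nonneg (h (Sum.inr ()) (Sum.inr ())), ha1 (k + 1), ha1 0,
          sp_one_le_norm hSp]
      · calc ‖hs (k + 1) (Sum.inr ()) (Sum.inr ())‖ ^ 2 - 1
            ≤ c * (‖hs k (Sum.inr ()) (Sum.inr ())‖ ^ 2 - 1) := h2
        _ ≤ c * (c ^ k * (‖h (Sum.inr ()) (Sum.inr ())‖ ^ 2 - 1)) :=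
            mul_le_mul_of_nonneg_left ihb hc0
        _ = c ^ (k + 1) * (‖h (Sum.inr ()) (Sum.inr ())‖ ^ 2 - 1) := by ring
  -- Part 1: strict decrease
  have hdec : ∀ k, ‖hs (k + 1) (Sum.inr ()) (Sum.inr ())‖
      < ‖hs k (Sum.inr ()) (Sum.inr ())‖ := by
    intro k
    have h1 := hkey k
    have hb0 : 0 < ‖hs k (Sum.inr ()) (Sum.inr ())‖ ^ 2 - 1 := by
      have := hbpos k
      linarith
    have hsq : ‖hs k (Sum.inr ()) (Sum.inr ())‖ ^ 2
        ≤ ‖h (Sum.inr ()) (Sum.inr ())‖ ^ 2 := by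
      have := (hmono k).1
      nlinarith [norm_nonneg (hs k (Sum.inr ()) (Sum.inr ())), ha1 k]
    have h3 : ‖hs k (Sum.inr ()) (Sum.inr ())‖ ^ 2 * δ ≤ c :=
      mul_le_mul_of_nonneg_right hsq hδ0
    have h4 : ‖hs (k + 1) (Sum.inr ()) (Sum.inr ())‖ ^ 2
        < ‖hs k (Sum.inr ()) (Sum.inr ())‖ ^ 2 := by nlinarith
    nlinarith [norm_nonneg (hs (k + 1) (Sum.inr ()) (Sum.inr ())),
      norm_nonneg (hs k (Sum.inr ()) (Sum.inr ()))]
  have hanti : StrictAnti (fun k => ‖hs k (Sum.inr ()) (Sum.inr ())‖) :=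
    strictAnti_nat_of_succ_lt hdec
  have hinj : Function.Injective hs := by
    intro j k hjk
    exact hanti.injective (by rw [hjk])
  -- Part 3: subsequence convergence
  have hbd : ∀ k, hs k ∈ {M : Matrix (Fin n ⊕ Unit) (Fin n ⊕ Unit) ℍ[ℝ] |
      ∀ i j, M i j ∈ Metric.closedBall (0 : ℍ[ℝ]) ‖h (Sum.inr ()) (Sum.inr ())‖} := by
    intro k i j
    rw [Metric.mem_closedBall, dist_zero_right]
    exact le_trans (sp_entry_bound (hsSp k) i j) (hmono k).1
  haveI : FirstCountableTopology (Matrix (Fin n ⊕ Unit) (Fin n ⊕ Unit) ℍ[ℝ]) :=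
    inferInstanceAs (FirstCountableTopology ((Fin n ⊕ Unit) → (Fin n ⊕ Unit) → ℍ[ℝ]))
  obtain ⟨L, hLmem, φ, hφ, hconv⟩ :=
    (matrix_compact ‖h (Sum.inr ()) (Sum.inr ())‖).tendsto_subseq hbd
  -- L ∈ Sp n
  have hLSp : L ∈ Sp n := by
    have hcont : Continuous (fun M : Matrix (Fin n ⊕ Unit) (Fin n ⊕ Unit) ℍ[ℝ] =>
        Mᴴ * Jm n * M) :=
      ((continuous_id.matrix_conjTranspose).matrix_mul continuous_const).matrix_mul
        continuous_id
    have h1 : Tendsto ((fun M : Matrix (Fin n ⊕ Unit) (Fin n ⊕ Unit) ℍ[ℝ] =>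
        Mᴴ * Jm n * M) ∘ (hs ∘ φ)) atTop (nhds (Lᴴ * Jm n * L)) :=
      (hcont.tendsto L).comp hconv
    have h2 : ((fun M : Matrix (Fin n ⊕ Unit) (Fin n ⊕ Unit) ℍ[ℝ] =>
        Mᴴ * Jm n * M) ∘ (hs ∘ φ)) = fun _ => Jm n := by
      funext t
      exact hsSp (φ t)
    rw [h2] at h1
    exact (tendsto_nhds_unique tendsto_const_nhds h1).symm
  -- off-diagonal limits vanish
  have htend0 : Tendsto (fun t => c ^ (φ t) * (‖h (Sum.inr ()) (Sum.inr ())‖ ^ 2 - 1))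
      atTop (nhds 0) := by
    have h1 : Tendsto (fun k : ℕ => c ^ k * (‖h (Sum.inr ()) (Sum.inr ())‖ ^ 2 - 1))
        atTop (nhds (0 * (‖h (Sum.inr ()) (Sum.inr ())‖ ^ 2 - 1))) :=
      (tendsto_pow_atTop_nhds_zero_of_lt_one hc0 hc1).mul_const _
    rw [zero_mul] at h1
    exact h1.comp hφ.tendsto_atTop
  have hsqrt0 : Tendsto (fun t =>
      Real.sqrt (c ^ (φ t) * (‖h (Sum.inr ()) (Sum.inr ())‖ ^ 2 - 1))) atTop (nhds 0) := by
    have h1 := (Real.continuous_sqrt.tendsto 0).comp htend0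
    rw [show Real.sqrt 0 = 0 from Real.sqrt_zero] at h1
    exact h1
  have hentry_tend : ∀ i j, Tendsto (fun t => hs (φ t) i j) atTop (nhds (L i j)) := by
    intro i j
    have hc2 : Continuous (fun M : Matrix (Fin n ⊕ Unit) (Fin n ⊕ Unit) ℍ[ℝ] => M i j) :=
      (continuous_apply j).comp (continuous_apply i)
    exact (hc2.tendsto L).comp hconv
  have hzero_of_sq : ∀ (f : ℕ → ℍ[ℝ]),
      (∀ k, ‖f k‖ ^ 2 ≤ c ^ k * (‖h (Sum.inr ()) (Sum.inr ())‖ ^ 2 - 1)) →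
      Tendsto (fun t => f (φ t)) atTop (nhds 0) := by
    intro f hf
    rw [tendsto_zero_iff_norm_tendsto_zero]
    apply squeeze_zero (fun t => norm_nonneg _) _ hsqrt0
    intro t
    have h1 := hf (φ t)
    calc ‖f (φ t)‖ = Real.sqrt (‖f (φ t)‖ ^ 2) := (Real.sqrt_sq (norm_nonneg _)).symm
    _ ≤ Real.sqrt (c ^ (φ t) * (‖h (Sum.inr ()) (Sum.inr ())‖ ^ 2 - 1)) :=
        Real.sqrt_le_sqrt h1
  have hβlim : ∀ i : Fin n, L (Sum.inr ()) (Sum.inl i) = 0 := by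
    intro i
    refine tendsto_nhds_unique (hentry_tend _ _)
      (hzero_of_sq (fun k => hs k (Sum.inr ()) (Sum.inl i)) ?_)
    intro k
    have h1 : ‖hs k (Sum.inr ()) (Sum.inl i)‖ ^ 2
        ≤ ∑ r : Fin n, ‖hs k (Sum.inr ()) (Sum.inl r)‖ ^ 2 :=
      Finset.single_le_sum (f := fun r => ‖hs k (Sum.inr ()) (Sum.inl r)‖ ^ 2)
        (fun r _ => sq_nonneg _) (Finset.mem_univ i)
    have h2 := sp_row_sum (hsSp k)
    have h3 := (hmono k).2
    linarith
  have hαlim : ∀ i : Fin n, L (Sum.inl i) (Sum.inr ()) = 0 := by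
    intro i
    refine tendsto_nhds_unique (hentry_tend _ _)
      (hzero_of_sq (fun k => hs k (Sum.inl i) (Sum.inr ())) ?_)
    intro k
    have h1 : ‖hs k (Sum.inl i) (Sum.inr ())‖ ^ 2
        ≤ ∑ r : Fin n, ‖hs k (Sum.inl r) (Sum.inr ())‖ ^ 2 :=
      Finset.single_le_sum (f := fun r => ‖hs k (Sum.inl r) (Sum.inr ())‖ ^ 2)
        (fun r _ => sq_nonneg _) (Finset.mem_univ i)
    have h2 := sp_col_alpha (hsSp k)
    have h3 := (hmono k).2
    linarith
  have hLblock : Matrix.fromBlocks (Matrix.of fun i j => L (Sum.inl i) (Sum.inl j))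
      (0 : Matrix (Fin n) Unit ℍ[ℝ]) (0 : Matrix Unit (Fin n) ℍ[ℝ])
      (Matrix.of fun _ _ => L (Sum.inr ()) (Sum.inr ())) = L := by
    apply Matrix.ext
    intro i j
    rcases i with i | i <;> rcases j with j | j
    · rfl
    · cases j
      exact (hαlim i).symm
    · cases i
      exact (hβlim j).symm
    · cases i; cases j; rfl
  -- Part 4: non-discreteness
  have hτmem : ∀ X ∈ genGrp n (Matrix.diagonal lam) h,
      Jm n * Xᴴ * Jm n ∈ genGrp n (Matrix.diagonal lam) h := by
    intro X hX
    refine Submonoid.closure_induction ?_ ?_ ?_ hX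
    · intro x hx
      rcases hx with rfl | rfl | rfl | rfl
      · exact Submonoid.subset_closure (by right; right; left; rfl)
      · exact Submonoid.subset_closure (by right; right; right; rfl)
      · rw [tau_tau]
        exact Submonoid.subset_closure (by left; rfl)
      · rw [tau_tau]
        exact Submonoid.subset_closure (by right; left; rfl)
    · rw [Matrix.conjTranspose_one, Matrix.mul_one, Jm_mul_Jm]
      exact one_mem _
    · intro x y hx hy hpx hpy
      rw [tau_mul]
      exact mul_mem hpy hpx
  have hmemk : ∀ k, hs k ∈ genGrp n (Matrix.diagonal lam) h := by
    intro k
    induction k with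
    | zero =>
      rw [hs0]
      exact Submonoid.subset_closure (by right; left; rfl)
    | succ k ih =>
      rw [hsrec]
      exact mul_mem (mul_mem ih (Submonoid.subset_closure (by left; rfl))) (hτmem _ ih)
  have hddef : ∀ t : ℕ, hs (φ (t + 1)) * (Jm n * (hs (φ t))ᴴ * Jm n)
      ∈ genGrp n (Matrix.diagonal lam) h := fun t =>
    mul_mem (hmemk _) (hτmem _ (hmemk _))
  have hdne : ∀ t : ℕ, hs (φ (t + 1)) * (Jm n * (hs (φ t))ᴴ * Jm n) ≠ 1 := by
    intro t h1
    have h2 : hs (φ (t + 1)) = hs (φ t) := by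
      have e1 : (Jm n * (hs (φ t))ᴴ * Jm n) * hs (φ t) = 1 := sp_left_inv (hsSp (φ t))
      calc hs (φ (t + 1)) = hs (φ (t + 1)) * 1 := (Matrix.mul_one _).symm
      _ = hs (φ (t + 1)) * ((Jm n * (hs (φ t))ᴴ * Jm n) * hs (φ t)) := by rw [e1]
      _ = (hs (φ (t + 1)) * (Jm n * (hs (φ t))ᴴ * Jm n)) * hs (φ t) :=
            (Matrix.mul_assoc _ _ _).symm
      _ = hs (φ t) := by rw [h1, Matrix.one_mul]
    have h3 := hinj h2
    exact absurd h3 (Nat.ne_of_gt (hφ (Nat.lt_succ_self t)))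
  have hdtend : Tendsto (fun t => hs (φ (t + 1)) * (Jm n * (hs (φ t))ᴴ * Jm n))
      atTop (nhds 1) := by
    have h1 : Tendsto (fun t => hs (φ (t + 1))) atTop (nhds L) :=
      hconv.comp (tendsto_add_atTop_nat 1)
    have hcont2 : Continuous (fun M : Matrix (Fin n ⊕ Unit) (Fin n ⊕ Unit) ℍ[ℝ] =>
        Jm n * Mᴴ * Jm n) :=
      (continuous_const.matrix_mul (continuous_id.matrix_conjTranspose)).matrix_mul
        continuous_const
    have h2 : Tendsto (fun t => Jm n * (hs (φ t))ᴴ * Jm n) atTop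
        (nhds (Jm n * Lᴴ * Jm n)) := (hcont2.tendsto L).comp hconv
    have h3 := h1.mul h2
    rw [sp_right_inv hLSp] at h3
    exact h3
  refine ⟨hdec, hinj, ⟨φ, hφ, Matrix.of fun i j => L (Sum.inl i) (Sum.inl j),
    L (Sum.inr ()) (Sum.inr ()), ?_, ?_⟩, ?_⟩
  · rw [hLblock]
    exact hLSp
  · rw [hLblock]
    exact hconv
  · intro hdisc
    set G := genGrp n (Matrix.diagonal lam) h with hG
    have h1 : Tendsto (fun t => (⟨hs (φ (t + 1)) * (Jm n * (hs (φ t))ᴴ * Jm n),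
        hddef t⟩ : G)) atTop (nhds (⟨1, one_mem G⟩ : G)) :=
      tendsto_subtype_rng.mpr hdtend
    rw [nhds_discrete] at h1
    rw [tendsto_pure] at h1
    obtain ⟨t, ht⟩ := h1.exists
    have h2 : hs (φ (t + 1)) * (Jm n * (hs (φ t))ᴴ * Jm n) = 1 := by
      have := congrArg Subtype.val ht
      exact this
    exact hdne t h2
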